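/- arXiv:1311.6686 — 7 statements merged into one kernel-verified Lean document; each statement's English description precedes it below -/
import Mathlib

section
/- If A is an n×m matrix and B an m×n matrix over a field, then pdet(AB) = pdet(BA). -/
open Polynomial

lemma charpolyRev_mul_comm {n m : ℕ} {K : Type*} [Field K]
    (A : Matrix (Fin n) (Fin m) K) (B : Matrix (Fin m) (Fin n) K) :
    Matrix.charpolyRev (A * B) = Matrix.charpolyRev (B * A) := by
  unfold Matrix.charpolyRev
  have h1 : (X : K[X]) • (A * B).map C = ((X : K[X]) • A.map C) * B.map C := by
    rw [Matrix.map_mul, Matrix.smul_mul]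
  have h2 : (X : K[X]) • (B * A).map C = B.map C * ((X : K[X]) • A.map C) := by
    rw [Matrix.map_mul, Matrix.mul_smul]
  rw [h1, h2, Matrix.det_one_sub_mul_comm]

/-- The pseudodeterminant of a square matrix: the last nonzero coefficient of the
unsigned characteristic polynomial `det (t • 1 + L)`. -/
noncomputable def pdet {n : ℕ} {K : Type*} [CommRing K]
    (L : Matrix (Fin n) (Fin n) K) : K :=
  (Matrix.charpoly (-L)).trailingCoeff

/-- `pdet (A * B) = pdet (B * A)` for rectangular matrices of complementary shapes. -/
theorem pdet_mul_comm {n m : ℕ} {K : Type*} [Field K]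
    (A : Matrix (Fin n) (Fin m) K) (B : Matrix (Fin m) (Fin n) K) :
    pdet (A * B) = pdet (B * A) := by
  unfold pdet
  rw [← reverse_leadingCoeff, ← reverse_leadingCoeff,
    Matrix.reverse_charpoly, Matrix.reverse_charpoly,
    show -(A * B) = (-A) * B from by rw [Matrix.neg_mul],
    show -(B * A) = B * (-A) from by rw [Matrix.mul_neg],
    charpolyRev_mul_comm]
end

section
/- If L and M are n×n matrices over an algebraically closed field with LM = 0 = ML, then pdet(L + M) = pdet(L)·pdet(M). -/
open Polynomial

/-- If `L` and `M` are mutually annihilating then `pdet (L + M) = pdet L * pdet M`. -/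
theorem pdet_add_of_mutually_annihilating {n : ℕ} {K : Type*} [Field K] [IsAlgClosed K]
    (L M : Matrix (Fin n) (Fin n) K) (hLM : L * M = 0) (hML : M * L = 0) :
    pdet (L + M) = pdet L * pdet M := by
  classical
  have hmat : Matrix.charmatrix (-L) * Matrix.charmatrix (-M)
      = (X : K[X]) • Matrix.charmatrix (-(L + M)) := by
    have hAB : ((-L).map C) * ((-M).map C) = 0 := by
      rw [← Matrix.map_mul, neg_mul_neg, hLM, Matrix.map_zero _ (map_zero C)]
    simp only [Matrix.charmatrix, RingHom.mapMatrix_apply, Matrix.scalar_apply,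
      ← Matrix.smul_one_eq_diagonal]
    have hC : (-(L + M)).map C = (-L).map C + (-M).map C := by
      ext i j; simp [neg_add]; ring
    rw [hC]
    simp only [sub_mul, mul_sub, Matrix.smul_mul, Matrix.mul_smul, one_mul, mul_one, hAB,
      sub_zero, smul_sub, smul_add]
    abel
  have key : (-L).charpoly * (-M).charpoly = X ^ n * (-(L + M)).charpoly := by
    unfold Matrix.charpoly
    rw [← Matrix.det_mul, hmat, Matrix.det_smul, Fintype.card_fin]
  have := congrArg Polynomial.trailingCoeff key
  rw [Polynomial.trailingCoeff_mul, Polynomial.trailingCoeff_mul] at this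
  have hX : (X ^ n : K[X]).trailingCoeff = 1 := by
    rw [Polynomial.trailingCoeff, Polynomial.natTrailingDegree_X_pow, Polynomial.coeff_X_pow]
    simp
  rw [hX, one_mul] at this
  unfold pdet
  rw [← this]
end

section
/- For any n×m matrix ∂ over a commutative ring, det(tI + ∂∂ᵗ) = Σ over pairs (I,J) with I ⊆ [n], J ⊆ [m], |I| = |J|, of t^{n-|I|}·(det ∂_{I,J})², where ∂_{I,J} denotes the submatrix with rows I and columns J. -/
open Polynomial Finset

/-- The square submatrix of `B` with rows indexed by `I` and columns by `J`
(in increasing order), defined when `I.card = J.card`, and `0` otherwise. -/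
noncomputable def minorDet {n m : ℕ} {R : Type*} [CommRing R]
    (B : Matrix (Fin n) (Fin m) R) (I : Finset (Fin n)) (J : Finset (Fin m)) : R :=
  if h : I.card = J.card then
    (B.submatrix (I.orderEmbOfFin rfl) (J.orderEmbOfFin h.symm)).det
  else 0

section aux

variable {R : Type*} [CommRing R]

lemma image_orderEmbOfFin {α : Type*} [LinearOrder α] (s : Finset α) {k : ℕ} (h : s.card = k) :
    Finset.univ.image (s.orderEmbOfFin h) = s := by
  ext a
  simp only [Finset.mem_image, Finset.mem_univ, true_and]
  constructor
  · rintro ⟨i, rfl⟩; exact s.orderEmbOfFin_mem h i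
  · intro ha
    have : a ∈ Set.range (s.orderEmbOfFin h) := by
      rw [Finset.range_orderEmbOfFin]; exact ha
    exact this

/-- Given an injective `f : Fin k → α` with image `J` (of card `k`), the permutation
relating `f` to the order embedding of `J`. -/
noncomputable def permOfInj {α : Type*} [LinearOrder α] {k : ℕ} (J : Finset α)
    (hJ : J.card = k) (f : Fin k → α) (hf : Function.Injective f)
    (hmem : ∀ i, f i ∈ J) : Equiv.Perm (Fin k) :=
  Equiv.ofBijective (fun i => (J.orderIsoOfFin hJ).symm ⟨f i, hmem i⟩)
    ((Finite.injective_iff_bijective).1 (fun a b hab => by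
      apply hf
      have := congrArg (fun x => ((J.orderIsoOfFin hJ) x : α)) hab
      simpa using this))

lemma orderEmbOfFin_permOfInj {α : Type*} [LinearOrder α] {k : ℕ} (J : Finset α)
    (hJ : J.card = k) (f : Fin k → α) (hf : Function.Injective f)
    (hmem : ∀ i, f i ∈ J) (i : Fin k) :
    J.orderEmbOfFin hJ (permOfInj J hJ f hf hmem i) = f i := by
  have h1 : ∀ x : Fin k, J.orderEmbOfFin hJ x = ((J.orderIsoOfFin hJ) x : α) := fun x =>
    (Finset.coe_orderIsoOfFin_apply J hJ x)
  rw [h1]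
  show (((J.orderIsoOfFin hJ) ((J.orderIsoOfFin hJ).symm ⟨f i, hmem i⟩)) : α) = f i
  rw [OrderIso.apply_symm_apply]

/-- Cauchy–Binet for `A * Aᵗ`. -/
lemma det_mul_transpose_eq_sum {k m : ℕ} (A : Matrix (Fin k) (Fin m) R) :
    (A * A.transpose).det
      = ∑ J ∈ Finset.univ.filter (fun J : Finset (Fin m) => J.card = k),
          (if h : J.card = k then (A.submatrix id (J.orderEmbOfFin h)).det else 0) ^ 2 := by
  classical
  have hrow : (A * A.transpose) = fun i => ∑ j, A i j • A.transpose j := by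
    funext i l
    simp [Matrix.mul_apply, Finset.sum_apply]
  have step1 : (A * A.transpose).det
      = ∑ r : Fin k → Fin m, (∏ i, A i (r i)) * (A.transpose.submatrix r id).det := by
    show Matrix.detRowAlternating (A * A.transpose) = _
    rw [hrow]
    rw [show (Matrix.detRowAlternating (fun i => ∑ j, A i j • A.transpose j) : R)
        = (Matrix.detRowAlternating :
            (Fin k → R) [⋀^Fin k]→ₗ[R] R).toMultilinearMap (fun i => ∑ j, A i j • A.transpose j)
        from rfl]
    rw [MultilinearMap.map_sum]
    refine Finset.sum_congr rfl fun r _ => ?_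
    rw [MultilinearMap.map_smul_univ]
    rfl
  rw [step1]
  have step2 : ∑ r : Fin k → Fin m, (∏ i, A i (r i)) * (A.transpose.submatrix r id).det
      = ∑ r ∈ Finset.univ.filter (fun r : Fin k → Fin m => Function.Injective r),
          (∏ i, A i (r i)) * (A.transpose.submatrix r id).det := by
    refine (Finset.sum_subset (Finset.filter_subset _ _) fun r _ hr => ?_).symm
    simp only [Finset.mem_filter, Finset.mem_univ, true_and] at hr
    rw [Function.not_injective_iff] at hr
    obtain ⟨a, b, hab, hne⟩ := hr
    rw [Matrix.det_zero_of_row_eq hne (by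
      show A.transpose.submatrix r id a = A.transpose.submatrix r id b
      funext j; simp [Matrix.submatrix_apply, hab]), mul_zero]
  rw [step2]
  rw [← Finset.sum_fiberwise_of_maps_to (g := fun r : Fin k → Fin m => Finset.univ.image r)
      (t := Finset.univ.filter (fun J : Finset (Fin m) => J.card = k))
      (fun r hr => by
        simp only [Finset.mem_filter, Finset.mem_univ, true_and] at hr ⊢
        rw [Finset.card_image_of_injective _ hr, Finset.card_univ, Fintype.card_fin])]
  refine Finset.sum_congr rfl fun J hJmem => ?_
  simp only [Finset.mem_filter, Finset.mem_univ, true_and] at hJmem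
  rw [dif_pos hJmem]
  set e := J.orderEmbOfFin hJmem with he
  -- inner fiber sum equals sum over permutations
  rw [show ((Finset.univ.filter (fun r : Fin k → Fin m => Function.Injective r)).filter
        (fun r => Finset.univ.image r = J))
      = ((Finset.univ.filter (fun r : Fin k → Fin m => Function.Injective r)).filter
        (fun r => Finset.univ.image r = J)) from rfl]
  have hbij : ∑ r ∈ ((Finset.univ.filter (fun r : Fin k → Fin m => Function.Injective r)).filter
        (fun r => Finset.univ.image r = J)),
        (∏ i, A i (r i)) * (A.transpose.submatrix r id).det
      = ∑ σ : Equiv.Perm (Fin k),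
        (∏ i, A i (e (σ i))) * (A.transpose.submatrix (fun i => e (σ i)) id).det := by
    refine (Finset.sum_bij (fun σ _ => fun i => e (σ i)) ?_ ?_ ?_ ?_).symm
    · intro σ _
      simp only [Finset.mem_filter, Finset.mem_univ, true_and]
      constructor
      · exact e.injective.comp σ.injective
      · have h1 : Finset.univ.image (fun i => e (σ i)) = Finset.univ.image e := by
          rw [show (fun i => e (σ i)) = e ∘ σ from rfl, ← Finset.image_image]
          congr 1
          ext j
          simp only [Finset.mem_image, Finset.mem_univ, true_and]
          exact ⟨fun _ => trivial, fun _ => ⟨σ.symm j, by simp⟩⟩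
        rw [h1]
        convert image_orderEmbOfFin J hJmem using 2
    · intro σ₁ _ σ₂ _ hfe
      ext i
      exact congrArg Fin.val (e.injective (congrFun hfe i))
    · intro r hr
      simp only [Finset.mem_filter, Finset.mem_univ, true_and] at hr
      obtain ⟨hinj, himg⟩ := hr
      have hmem : ∀ i, r i ∈ J := fun i => by
        rw [← himg]; exact Finset.mem_image_of_mem r (Finset.mem_univ i)
      exact ⟨permOfInj J hJmem r hinj hmem, Finset.mem_univ _,
        funext fun i => (orderEmbOfFin_permOfInj J hJmem r hinj hmem i)⟩
    · intro σ _; rfl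
  rw [hbij]
  have hperm : ∀ σ : Equiv.Perm (Fin k),
      (A.transpose.submatrix (fun i => e (σ i)) id).det
        = ((Equiv.Perm.sign σ : ℤ) : R) * (A.transpose.submatrix e id).det := by
    intro σ
    rw [show A.transpose.submatrix (fun i => e (σ i)) id
        = (A.transpose.submatrix e id).submatrix σ id from rfl]
    rw [Matrix.det_permute]
  have hdT : (A.transpose.submatrix e id).det = (A.submatrix id e).det := by
    rw [← Matrix.det_transpose, Matrix.transpose_submatrix]
    rfl
  calc ∑ σ : Equiv.Perm (Fin k),
        (∏ i, A i (e (σ i))) * (A.transpose.submatrix (fun i => e (σ i)) id).det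
      = ∑ σ : Equiv.Perm (Fin k),
          (((Equiv.Perm.sign σ : ℤ) : R) * ∏ i, (A.submatrix id e).transpose (σ i) i)
            * (A.submatrix id e).det := by
        refine Finset.sum_congr rfl fun σ _ => ?_
        rw [hperm σ, hdT]
        have hprod : (∏ i, A i (e (σ i)))
            = ∏ i, (A.submatrix id e).transpose (σ i) i :=
          Finset.prod_congr rfl fun i _ => rfl
        rw [hprod]; ring
    _ = ((A.submatrix id e).transpose).det * (A.submatrix id e).det := by
        conv_rhs => rw [Matrix.det_apply', Finset.sum_mul]
    _ = (A.submatrix id (J.orderEmbOfFin hJmem)).det ^ 2 := by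
        rw [Matrix.det_transpose, sq]

lemma det_piecewise {n : ℕ} (x : R) (N : Matrix (Fin n) (Fin n) R) (s : Finset (Fin n)) :
    Matrix.det (s.piecewise (x • (1 : Matrix (Fin n) (Fin n) R)) N)
      = x ^ (n - (sᶜ).card)
        * (N.submatrix ((sᶜ).orderEmbOfFin rfl) ((sᶜ).orderEmbOfFin rfl)).det := by
  classical
  set e := (sᶜ).orderEmbOfFin rfl with he
  set D := s.piecewise (x • (1 : Matrix (Fin n) (Fin n) R)) N with hD
  have hcard : n - (sᶜ).card = s.card := by
    rw [Finset.card_compl, Fintype.card_fin,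
      Nat.sub_sub_self (by simpa using Finset.card_le_univ s)]
  rw [Matrix.det_apply' (D : Matrix (Fin n) (Fin n) R)]
  rw [← Finset.sum_filter_add_sum_filter_not Finset.univ
      (fun σ : Equiv.Perm (Fin n) => ∀ j ∈ s, σ j = j)]
  have hzero : ∑ σ ∈ Finset.univ.filter
      (fun σ : Equiv.Perm (Fin n) => ¬ ∀ j ∈ s, σ j = j),
      ((Equiv.Perm.sign σ : ℤ) : R) * ∏ i, D (σ i) i = 0 := by
    refine Finset.sum_eq_zero fun σ hσ => ?_
    simp only [Finset.mem_filter, Finset.mem_univ, true_and] at hσ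
    push_neg at hσ
    obtain ⟨j, hjs, hj⟩ := hσ
    have hfac : D (σ (σ⁻¹ j)) (σ⁻¹ j) = 0 := by
      rw [show σ (σ⁻¹ j) = j from σ.apply_symm_apply j]
      have hDj : D j = (x • (1 : Matrix (Fin n) (Fin n) R)) j :=
        Finset.piecewise_eq_of_mem _ _ _ hjs
      rw [hDj]
      have hne : j ≠ σ⁻¹ j := by
        intro h
        apply hj
        conv_lhs => rw [h]
        rw [show σ (σ⁻¹ j) = j from σ.apply_symm_apply j]
      simp [Matrix.smul_apply, Matrix.one_apply, hne]
      exact fun h => absurd h hne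
    exact mul_eq_zero_of_right _ (Finset.prod_eq_zero (Finset.mem_univ (σ⁻¹ j)) hfac)
  rw [hzero, add_zero]
  have hterm : ∀ σ ∈ Finset.univ.filter
      (fun σ : Equiv.Perm (Fin n) => ∀ j ∈ s, σ j = j),
      ((Equiv.Perm.sign σ : ℤ) : R) * ∏ i, D (σ i) i
        = x ^ (n - (sᶜ).card)
          * (((Equiv.Perm.sign σ : ℤ) : R) * ∏ i ∈ sᶜ, N (σ i) i) := by
    intro σ hσ
    simp only [Finset.mem_filter, Finset.mem_univ, true_and] at hσ
    have hmap : ∀ i ∈ sᶜ, σ i ∈ sᶜ := by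
      intro i hi
      by_contra hcon
      have h1 : σ i ∈ s := by
        by_contra h2
        exact hcon (Finset.mem_compl.2 h2)
      have h2 : σ (σ i) = σ i := hσ _ h1
      have h3 : σ i = i := σ.injective h2
      rw [h3] at h1
      exact Finset.mem_compl.1 hi h1
    have hsplit : (∏ i, D (σ i) i) = (∏ i ∈ sᶜ, D (σ i) i) * ∏ i ∈ s, D (σ i) i := by
      rw [mul_comm]
      exact (Finset.prod_mul_prod_compl s _).symm
    have hI : (∏ i ∈ sᶜ, D (σ i) i) = ∏ i ∈ sᶜ, N (σ i) i := by
      refine Finset.prod_congr rfl fun i hi => ?_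
      have hns : σ i ∉ s := Finset.mem_compl.1 (hmap i hi)
      rw [hD, show s.piecewise (x • (1 : Matrix (Fin n) (Fin n) R)) N (σ i)
          = N (σ i) from Finset.piecewise_eq_of_notMem _ _ _ hns]
    have hIc : (∏ i ∈ s, D (σ i) i) = x ^ (n - (sᶜ).card) := by
      have hx : ∀ i ∈ s, D (σ i) i = x := by
        intro i hi
        rw [hσ i hi]
        rw [hD, show s.piecewise (x • (1 : Matrix (Fin n) (Fin n) R)) N i
            = (x • (1 : Matrix (Fin n) (Fin n) R)) i from
            Finset.piecewise_eq_of_mem _ _ _ hi]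
        simp [Matrix.smul_apply, Matrix.one_apply]
      rw [Finset.prod_congr rfl hx, Finset.prod_const, hcard]
    rw [hsplit, hI, hIc]
    ring
  rw [Finset.sum_congr rfl hterm, ← Finset.mul_sum]
  congr 1
  have hrange : ∀ j, j ∈ sᶜ ↔ j ∈ Set.range (e.toEmbedding : Fin (sᶜ).card → Fin n) := by
    intro j
    rw [show ((e.toEmbedding : Fin (sᶜ).card → Fin n)) = (e : Fin (sᶜ).card → Fin n) from rfl]
    rw [he, Finset.range_orderEmbOfFin]
    simp
  have hsum : ∑ σ ∈ Finset.univ.filter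
      (fun σ : Equiv.Perm (Fin n) => ∀ j ∈ s, σ j = j),
      ((Equiv.Perm.sign σ : ℤ) : R) * ∏ i ∈ sᶜ, N (σ i) i
      = ∑ τ : Equiv.Perm (Fin (sᶜ).card),
          ((Equiv.Perm.sign τ : ℤ) : R)
            * ∏ i', (N.submatrix e e) (τ i') i' := by
    refine (Finset.sum_bij
      (fun (τ : Equiv.Perm (Fin (sᶜ).card)) _ => τ.viaFintypeEmbedding e.toEmbedding)
      ?_ ?_ ?_ ?_).symm
    · intro τ _
      simp only [Finset.mem_filter, Finset.mem_univ, true_and]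
      intro j hj
      refine Equiv.Perm.viaFintypeEmbedding_apply_notMem_range _ _ ?_
      rw [← hrange]
      simp [Finset.mem_compl, hj]
    · intro τ₁ _ τ₂ _ hfe
      have hfe' : τ₁.viaFintypeEmbedding e.toEmbedding
          = τ₂.viaFintypeEmbedding e.toEmbedding := hfe
      ext i
      have h1 : τ₁.viaFintypeEmbedding e.toEmbedding (e.toEmbedding i)
          = τ₂.viaFintypeEmbedding e.toEmbedding (e.toEmbedding i) := by rw [hfe']
      rw [Equiv.Perm.viaFintypeEmbedding_apply_image,
        Equiv.Perm.viaFintypeEmbedding_apply_image] at h1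
      exact congrArg Fin.val (e.toEmbedding.injective h1)
    · intro σ hσ
      simp only [Finset.mem_filter, Finset.mem_univ, true_and] at hσ
      have hmap : ∀ i ∈ sᶜ, σ i ∈ sᶜ := by
        intro i hi
        by_contra hcon
        have h1 : σ i ∈ s := by
          by_contra h2
          exact hcon (Finset.mem_compl.2 h2)
        have h2 : σ (σ i) = σ i := hσ _ h1
        have h3 : σ i = i := σ.injective h2
        rw [h3] at h1
        exact Finset.mem_compl.1 hi h1
      have hmem : ∀ i', σ (e i') ∈ sᶜ := fun i' =>
        hmap _ ((sᶜ).orderEmbOfFin_mem rfl i')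
      have hinj : Function.Injective (fun i' => σ (e i')) :=
        σ.injective.comp e.injective
      refine ⟨permOfInj (sᶜ) rfl (fun i' => σ (e i')) hinj hmem, Finset.mem_univ _, ?_⟩
      ext j
      by_cases hjI : j ∈ sᶜ
      · obtain ⟨i', hi'⟩ := (hrange j).1 hjI
        rw [← hi']
        rw [show ((permOfInj (sᶜ) rfl (fun i' => σ (e i')) hinj hmem).viaFintypeEmbedding
            e.toEmbedding) (e.toEmbedding i') = e.toEmbedding
            ((permOfInj (sᶜ) rfl (fun i' => σ (e i')) hinj hmem) i') from
            Equiv.Perm.viaFintypeEmbedding_apply_image _ _ _]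
        exact congrArg Fin.val
          (orderEmbOfFin_permOfInj (sᶜ) rfl (fun i' => σ (e i')) hinj hmem i')
      · have h1 : j ∈ s := by
          by_contra h2
          exact hjI (Finset.mem_compl.2 h2)
        rw [show ((permOfInj (sᶜ) rfl (fun i' => σ (e i')) hinj hmem).viaFintypeEmbedding
            e.toEmbedding) j = j from
            Equiv.Perm.viaFintypeEmbedding_apply_notMem_range _ _ (by
              rw [← hrange]; exact hjI)]
        exact (congrArg Fin.val (hσ j h1)).symm
    · intro τ _
      have hpr : ∏ i' : Fin (sᶜ).card, (N.submatrix e e) (τ i') i'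
          = ∏ i ∈ sᶜ, N ((τ.viaFintypeEmbedding e.toEmbedding) i) i := by
        refine Finset.prod_bij (fun (i' : Fin (sᶜ).card) _ => e i')
          (fun i' _ => (sᶜ).orderEmbOfFin_mem rfl i')
          (fun a _ b _ hab => e.injective hab)
          (fun j hj => by
            obtain ⟨i', hi'⟩ := (hrange j).1 hj
            exact ⟨i', Finset.mem_univ _, hi'⟩)
          (fun i' _ => ?_)
        rw [show (τ.viaFintypeEmbedding e.toEmbedding) (e i')
            = e.toEmbedding (τ i') from Equiv.Perm.viaFintypeEmbedding_apply_image _ _ _]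
        rfl
      show ((Equiv.Perm.sign τ : ℤ) : R) * ∏ i', (N.submatrix e e) (τ i') i'
          = ((Equiv.Perm.sign (τ.viaFintypeEmbedding e.toEmbedding) : ℤ) : R)
            * ∏ i ∈ sᶜ, N ((τ.viaFintypeEmbedding e.toEmbedding) i) i
      rw [Equiv.Perm.viaFintypeEmbedding_sign, hpr]
  rw [hsum, ← Matrix.det_apply']

lemma det_smul_one_add {n : ℕ} (x : R) (N : Matrix (Fin n) (Fin n) R) :
    (x • (1 : Matrix (Fin n) (Fin n) R) + N).det
      = ∑ I : Finset (Fin n), x ^ (n - I.card)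
          * (N.submatrix (I.orderEmbOfFin rfl) (I.orderEmbOfFin rfl)).det := by
  classical
  have h0 : (x • (1 : Matrix (Fin n) (Fin n) R) + N).det
      = ∑ s : Finset (Fin n),
          Matrix.det (s.piecewise (x • (1 : Matrix (Fin n) (Fin n) R)) N) :=
    MultilinearMap.map_add_univ
      (Matrix.detRowAlternating : (Fin n → R) [⋀^Fin n]→ₗ[R] R).toMultilinearMap _ _
  rw [h0]
  have hinv : Function.Involutive (fun s : Finset (Fin n) => sᶜ) :=
    fun s => compl_compl s
  calc ∑ s : Finset (Fin n),
        Matrix.det (s.piecewise (x • (1 : Matrix (Fin n) (Fin n) R)) N)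
      = ∑ s : Finset (Fin n), x ^ (n - (sᶜ).card)
          * (N.submatrix ((sᶜ).orderEmbOfFin rfl) ((sᶜ).orderEmbOfFin rfl)).det :=
        Finset.sum_congr rfl fun s _ => det_piecewise x N s
    _ = ∑ I : Finset (Fin n), x ^ (n - I.card)
          * (N.submatrix (I.orderEmbOfFin rfl) (I.orderEmbOfFin rfl)).det :=
        Fintype.sum_bijective _ (hinv.toPerm _).bijective _ _ (fun s => rfl)
end aux

/-- The principal-minor / Cauchy–Binet expansion:
`det (t•1 + BBᵗ) = Σ_{I⊆[n], J⊆[m], |I|=|J|} t^(n-|I|) (det B_{I,J})²`. -/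
theorem charpoly_expansion {n m : ℕ} {R : Type*} [CommRing R]
    (B : Matrix (Fin n) (Fin m) R) :
    ((Polynomial.X : R[X]) • (1 : Matrix (Fin n) (Fin n) R[X])
        + (B * B.transpose).map Polynomial.C).det
    = ∑ I : Finset (Fin n),
        ∑ J ∈ Finset.univ.filter (fun J : Finset (Fin m) => J.card = I.card),
          Polynomial.X ^ (n - I.card) * Polynomial.C ((minorDet B I J) ^ 2) := by
  classical
  rw [det_smul_one_add]
  refine Finset.sum_congr rfl fun I _ => ?_
  set e := I.orderEmbOfFin (rfl : I.card = I.card) with he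
  set A := B.submatrix e id with hA
  have h1 : ((B * B.transpose).map Polynomial.C).submatrix e e
      = (A * A.transpose).map Polynomial.C := by
    ext i j
    simp [Matrix.map_apply, Matrix.submatrix_apply, Matrix.mul_apply, hA]
  rw [h1]
  rw [show ((A * A.transpose).map (Polynomial.C : R →+* R[X]) : Matrix (Fin I.card) (Fin I.card) R[X])
      = (Polynomial.C : R →+* R[X]).mapMatrix (A * A.transpose) from rfl]
  rw [← RingHom.map_det, det_mul_transpose_eq_sum, map_sum, Finset.mul_sum]
  refine Finset.sum_congr rfl fun J hJ => ?_
  simp only [Finset.mem_filter, Finset.mem_univ, true_and] at hJ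
  congr 1
  rw [dif_pos hJ]
  unfold minorDet
  rw [dif_pos hJ.symm]
  congr 1
end

section
/- Let ∂ be a square n×n matrix of rank r over a field with ∂ᵗ = ∂ or ∂ᵗ = -∂. Then for any r-subsets I, J ⊆ [n], det(∂_{I,I})·det(∂_{J,J}) = (det ∂_{I,J})². In particular, the product of any two r×r principal minors of ∂ is a perfect square. -/
open Finset

lemma matrix_rank_factorization {n r : ℕ} {K : Type*} [Field K]
    (M : Matrix (Fin n) (Fin n) K) (hr : M.rank = r) :
    ∃ (A : Matrix (Fin n) (Fin r) K) (B : Matrix (Fin r) (Fin n) K), M = A * B := by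
  set V := LinearMap.range M.mulVecLin with hV
  have hfin : Module.finrank K V = r := hr
  let b : Module.Basis (Fin r) K V := Module.finBasisOfFinrankEq K V hfin
  let col : Fin n → V := fun j =>
    ⟨M.mulVec (Pi.single j 1), LinearMap.mem_range.2 ⟨Pi.single j 1, rfl⟩⟩
  refine ⟨Matrix.of fun i k => (b k : Fin n → K) i, Matrix.of fun k j => b.repr (col j) k, ?_⟩
  ext i j
  have : (col j : Fin n → K) = ∑ k, b.repr (col j) k • (b k : Fin n → K) := by
    have h := congrArg Subtype.val (b.sum_repr (col j)).symm
    simpa only [Submodule.coe_sum, Submodule.coe_smul] using h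
  have hcol : (col j : Fin n → K) i = M i j := by
    simp [col, Matrix.mulVec_single]
  rw [Matrix.mul_apply]
  simp only [Matrix.of_apply]
  rw [← hcol, this]
  simp [mul_comm]

lemma minor_identity {n r : ℕ} {K : Type*} [Field K]
    (M : Matrix (Fin n) (Fin n) K) (hr : M.rank = r) (f g : Fin r → Fin n) :
    (M.submatrix f f).det * (M.submatrix g g).det
      = (M.submatrix f g).det * (M.submatrix g f).det := by
  obtain ⟨A, B, rfl⟩ := matrix_rank_factorization M hr
  have hsub : ∀ u v : Fin r → Fin n,
      (A * B).submatrix u v = A.submatrix u id * B.submatrix id v := fun u v =>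
    Matrix.submatrix_mul A B u id v Function.bijective_id
  simp only [hsub, Matrix.det_mul]
  ring

/-- For a symmetric or skew-symmetric square matrix of rank `r` and `r`-subsets
`I, J` of indices, `det M_{I,I} · det M_{J,J} = (det M_{I,J})²`. -/
theorem principal_minor_product_is_square {n r : ℕ} {K : Type*} [Field K]
    (M : Matrix (Fin n) (Fin n) K) (hsym : M.transpose = M ∨ M.transpose = -M)
    (hr : M.rank = r)
    (I J : Finset (Fin n)) (hI : I.card = r) (hJ : J.card = r) :
    (M.submatrix (I.orderEmbOfFin hI) (I.orderEmbOfFin hI)).det *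
      (M.submatrix (J.orderEmbOfFin hJ) (J.orderEmbOfFin hJ)).det
    = ((M.submatrix (I.orderEmbOfFin hI) (J.orderEmbOfFin hJ)).det) ^ 2 := by
  set f : Fin r → Fin n := ⇑(I.orderEmbOfFin hI) with hf
  set g : Fin r → Fin n := ⇑(J.orderEmbOfFin hJ) with hg
  have key := minor_identity M hr f g
  have htrans : ∀ u v : Fin r → Fin n,
      M.submatrix v u = (M.transpose.submatrix u v).transpose := by
    intro u v; ext a b; simp [Matrix.transpose_apply]
  rcases hsym with hs | hs
  · -- symmetric
    have : (M.submatrix g f).det = (M.submatrix f g).det := by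
      rw [htrans f g, hs, Matrix.det_transpose]
    rw [key, this, sq]
  · -- skew
    have hgf : (M.submatrix g f).det = (-1 : K) ^ r * (M.submatrix f g).det := by
      rw [htrans f g, hs, Matrix.det_transpose]
      have : (-M).submatrix f g = -(M.submatrix f g) := rfl
      rw [this, Matrix.det_neg]
      simp
    rcases Nat.even_or_odd r with hre | hro
    · rw [key, hgf, hre.neg_one_pow, one_mul, sq]
    · rw [hro.neg_one_pow] at hgf
      by_cases h2 : (2 : K) = 0
      · have hneg : ∀ x : K, -x = x := by
          intro x
          rw [neg_eq_iff_add_eq_zero, ← two_mul, h2, zero_mul]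
        rw [key, hgf, neg_one_mul, mul_neg, ← sq, hneg]
      · -- char ≠ 2 : both sides are zero
        have hff : (M.submatrix f f).det = 0 := by
          have h1 : (M.submatrix f f).det = -(M.submatrix f f).det := by
            conv_lhs => rw [htrans f f, hs]
            rw [Matrix.det_transpose]
            have : (-M).submatrix f f = -(M.submatrix f f) := rfl
            rw [this, Matrix.det_neg, Fintype.card_fin, hro.neg_one_pow, neg_one_mul]
          have h2' : (2 : K) * (M.submatrix f f).det = 0 := by linear_combination h1
          exact (mul_eq_zero.mp h2').resolve_left h2
        have hfg : (M.submatrix f g).det = 0 := by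
          have h0 : (M.submatrix f g).det * (M.submatrix g f).det = 0 := by
            rw [← key, hff, zero_mul]
          rw [hgf, neg_one_mul, mul_neg, ← sq, neg_eq_zero] at h0
          exact pow_eq_zero_iff (by norm_num) |>.mp h0
        rw [hff, zero_mul, hfg]
        ring
end

section
/- Let ∂ be an n×n matrix over ℝ with ∂ᵗ = ∂ or ∂ᵗ = -∂. Then pdet(∂∂ᵗ) = (pdet ∂)², where pdet denotes the product of the nonzero eigenvalues (over ℂ) with algebraic multiplicity, equivalently the last nonzero coefficient of det(tI + ·). -/
open Polynomial

open Matrix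

section helpers

variable {R : Type*} [CommRing R] {n : ℕ}

lemma coeff_comp_C_mul_X (p : R[X]) (c : R) (k : ℕ) :
    (p.comp (C c * X)).coeff k = c ^ k * p.coeff k := by
  induction p using Polynomial.induction_on' with
  | add p q hp hq => simp [add_comp, hp, hq, mul_add]
  | monomial e a =>
      rw [← C_mul_X_pow_eq_monomial, mul_comp, C_comp, pow_comp, X_comp, mul_pow,
        ← C_pow, mul_left_comm]
      simp only [coeff_C_mul, coeff_X_pow]
      rcases eq_or_ne k e with rfl | hke
      · ring
      · simp [hke]

lemma ntd_congr {S : Type*} [Semiring S] {p : R[X]} {q : S[X]}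
    (h : ∀ k, p.coeff k = 0 ↔ q.coeff k = 0) :
    p.natTrailingDegree = q.natTrailingDegree := by
  by_cases hp : p = 0
  · have hq : q = 0 := by
      ext k; simpa using (h k).mp (by simp [hp])
    simp [hp, hq]
  · have hq : q ≠ 0 := fun hq0 => hp (by ext k; exact (h k).mpr (by simp [hq0]))
    apply le_antisymm
    · exact natTrailingDegree_le_of_ne_zero fun h0 =>
        (mt trailingCoeff_eq_zero.mp hq) ((h _).mp h0)
    · exact natTrailingDegree_le_of_ne_zero fun h0 =>
        (mt trailingCoeff_eq_zero.mp hp) ((h _).mpr h0)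

lemma charpoly_comp_det (A : Matrix (Fin n) (Fin n) R) (q : R[X]) :
    (Matrix.charpoly A).comp q = ((charmatrix A).map (eval₂ C q)).det := by
  have := RingHom.map_det (eval₂RingHom C q : R[X] →+* R[X]) (charmatrix A)
  simpa [Matrix.charpoly, Polynomial.comp, RingHom.mapMatrix_apply] using this

lemma charmatrix_map_eval₂ (A : Matrix (Fin n) (Fin n) R) (q : R[X]) :
    (charmatrix A).map (eval₂ C q) =
      Matrix.scalar (Fin n) q - (C : R →+* R[X]).mapMatrix A := by
  ext i j
  by_cases h : i = j <;>
    simp [h, charmatrix_apply, Matrix.map_apply, diagonal_apply, scalar_apply,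
      RingHom.mapMatrix_apply, Matrix.sub_apply]

lemma charpoly_sq_comp (A : Matrix (Fin n) (Fin n) R) :
    (Matrix.charpoly (A * A)).comp (X ^ 2) =
      Matrix.charpoly A * Matrix.charpoly (-A) := by
  rw [charpoly_comp_det, charmatrix_map_eval₂]
  have hcomm : Commute (Matrix.scalar (Fin n) (X : R[X]))
      ((C : R →+* R[X]).mapMatrix A) :=
    scalar_commute _ (fun r => Commute.all _ r) _
  have key : Matrix.scalar (Fin n) (X ^ 2 : R[X]) -
      (C : R →+* R[X]).mapMatrix (A * A) = charmatrix A * charmatrix (-A) := by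
    rw [sq, _root_.map_mul, _root_.map_mul]
    rw [show charmatrix (-A) = Matrix.scalar (Fin n) (X : R[X]) +
      (C : R →+* R[X]).mapMatrix A by
        ext i j; by_cases h : i = j <;>
          simp [charmatrix_apply, diagonal_apply, h, RingHom.mapMatrix_apply,
            Matrix.sub_apply, Matrix.add_apply, Matrix.map_apply]]
    rw [show charmatrix A = Matrix.scalar (Fin n) (X : R[X]) -
      (C : R →+* R[X]).mapMatrix A from rfl]
    exact hcomm.mul_self_sub_mul_self_eq'
  rw [key, Matrix.det_mul, Matrix.charpoly, Matrix.charpoly]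

lemma trailingCoeff_comp_X_sq (p : R[X]) :
    (p.comp (X ^ 2)).trailingCoeff = p.trailingCoeff := by
  rw [← expand_eq_comp_X_pow]
  by_cases hp : p = 0
  · simp [hp]
  have hne : expand R 2 p ≠ 0 := (expand_ne_zero two_pos).mpr hp
  have hntd : (expand R 2 p).natTrailingDegree = 2 * p.natTrailingDegree := by
    apply le_antisymm
    · apply natTrailingDegree_le_of_ne_zero
      rw [coeff_expand_mul' two_pos]
      exact mt trailingCoeff_eq_zero.mp hp
    · apply le_natTrailingDegree hne
      intro m hm
      rw [coeff_expand two_pos]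
      split_ifs with hdvd
      · exact coeff_eq_zero_of_lt_natTrailingDegree (by omega)
      · rfl
  simp only [Polynomial.trailingCoeff]
  rw [hntd, coeff_expand_mul' two_pos]

lemma charpoly_transpose' (A : Matrix (Fin n) (Fin n) R) :
    Matrix.charpoly Aᵀ = Matrix.charpoly A := by
  rw [Matrix.charpoly, Matrix.charpoly,
    show charmatrix Aᵀ = (charmatrix A)ᵀ by
      ext i j
      by_cases h : i = j <;>
        simp [charmatrix_apply, diagonal_apply, h, transpose_apply, eq_comm],
    Matrix.det_transpose]

lemma map_neg' {S : Type*} [CommRing S] (f : R →+* S) (L : Matrix (Fin n) (Fin n) R) :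
    (-L).map f = -(L.map f) := by
  ext i j; simp [Matrix.map_apply]

lemma trailingCoeff_map_inj {S : Type*} [CommRing S] {f : R →+* S}
    (hf : Function.Injective f) (p : R[X]) :
    (p.map f).trailingCoeff = f p.trailingCoeff := by
  have hntd : p.natTrailingDegree = (p.map f).natTrailingDegree :=
    ntd_congr fun k => by
      rw [coeff_map]
      exact ⟨fun h => by rw [h, map_zero], fun h => hf (by rw [h, map_zero])⟩
  rw [Polynomial.trailingCoeff, Polynomial.trailingCoeff, ← hntd, coeff_map]

lemma charpoly_inv_smul_coeff {K : Type*} [Field K] (A : Matrix (Fin n) (Fin n) K)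
    {c : K} (hc : c ≠ 0) (k : ℕ) :
    (Matrix.charpoly (c⁻¹ • A)).coeff k =
      c⁻¹ ^ n * c ^ k * (Matrix.charpoly A).coeff k := by
  have key : (Matrix.charpoly A).comp (C c * X) =
      (C c) ^ n * Matrix.charpoly (c⁻¹ • A) := by
    rw [charpoly_comp_det, charmatrix_map_eval₂]
    have hmat : Matrix.scalar (Fin n) (C c * X) - (C : K →+* K[X]).mapMatrix A
        = (C c) • charmatrix (c⁻¹ • A) := by
      ext i j : 2
      by_cases h : i = j
      · subst h
        rw [Matrix.sub_apply, scalar_apply, diagonal_apply_eq, RingHom.mapMatrix_apply,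
          Matrix.map_apply, Matrix.smul_apply, charmatrix_apply_eq, Matrix.smul_apply,
          smul_eq_mul, smul_eq_mul, mul_sub, ← C_mul, ← mul_assoc, mul_inv_cancel₀ hc,
          one_mul]
      · rw [Matrix.sub_apply, scalar_apply, diagonal_apply_ne _ h, RingHom.mapMatrix_apply,
          Matrix.map_apply, Matrix.smul_apply, charmatrix_apply_ne _ _ _ h, Matrix.smul_apply,
          smul_eq_mul, smul_eq_mul, mul_neg, ← C_mul, ← mul_assoc, mul_inv_cancel₀ hc,
          one_mul, zero_sub]
    rw [hmat, Matrix.det_smul, Matrix.charpoly, Fintype.card_fin]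
  have h2 := congrArg (fun p => p.coeff k) key
  simp only [coeff_comp_C_mul_X, ← C_pow, coeff_C_mul] at h2
  have hcn : c ^ n ≠ 0 := pow_ne_zero _ hc
  rw [inv_pow, mul_assoc, h2, inv_mul_cancel_left₀ hcn]

lemma charpoly_inv_smul_trailingCoeff {K : Type*} [Field K] (A : Matrix (Fin n) (Fin n) K)
    {c : K} (hc : c ≠ 0) :
    (Matrix.charpoly (c⁻¹ • A)).trailingCoeff =
      c⁻¹ ^ n * c ^ (Matrix.charpoly A).natTrailingDegree *
        (Matrix.charpoly A).trailingCoeff := by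
  have hntd : (Matrix.charpoly (c⁻¹ • A)).natTrailingDegree =
      (Matrix.charpoly A).natTrailingDegree := by
    refine (ntd_congr fun k => ?_)
    rw [charpoly_inv_smul_coeff A hc k]
    constructor
    · intro h
      rcases mul_eq_zero.mp h with h | h
      · exact absurd h (mul_ne_zero (pow_ne_zero _ (inv_ne_zero hc)) (pow_ne_zero _ hc))
      · exact h
    · intro h; rw [h, mul_zero]
  rw [Polynomial.trailingCoeff, Polynomial.trailingCoeff, hntd, charpoly_inv_smul_coeff A hc]

end helpers

/-- For a real symmetric or skew-symmetric matrix, `pdet (MMᵗ) = (pdet M)²`. -/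
theorem pdet_self_mul_transpose {n : ℕ}
    (M : Matrix (Fin n) (Fin n) ℝ) (hsym : M.transpose = M ∨ M.transpose = -M) :
    pdet (M * M.transpose) = (pdet M) ^ 2 := by
  have hf : Function.Injective (Complex.ofRealHom : ℝ →+* ℂ) := Complex.ofReal_injective
  apply hf
  set f := (Complex.ofRealHom : ℝ →+* ℂ) with hfdef
  set A := M.map f with hA
  have hpdet : ∀ L : Matrix (Fin n) (Fin n) ℝ, f (pdet L) =
      (Matrix.charpoly (-(L.map f))).trailingCoeff := by
    intro L
    rw [pdet, ← trailingCoeff_map_inj hf, ← Matrix.charpoly_map, map_neg' f L]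
  rw [map_pow, hpdet, hpdet]
  have hAAT : (M * M.transpose).map f = A * A.transpose := by
    rw [Matrix.map_mul, Matrix.transpose_map]
  rw [hAAT]
  set r := (Matrix.charpoly A).natTrailingDegree with hr
  set a := (Matrix.charpoly A).trailingCoeff with ha
  have htcnegA : (Matrix.charpoly (-A)).trailingCoeff = (-1 : ℂ)⁻¹ ^ n * (-1) ^ r * a := by
    rw [show -A = (-1 : ℂ)⁻¹ • A by rw [inv_neg_one, neg_smul, one_smul]]
    exact charpoly_inv_smul_trailingCoeff A (by norm_num)
  rcases hsym with h | h
  · -- symmetric case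
    have hAT : A.transpose = A := by rw [hA, ← Matrix.transpose_map, h]
    rw [hAT]
    set B := Complex.I • A with hB
    have hBB : -(A * A) = B * B := by
      rw [hB, smul_mul_smul_comm, Complex.I_mul_I, neg_smul, one_smul]
    rw [hBB, ← trailingCoeff_comp_X_sq, charpoly_sq_comp, trailingCoeff_mul]
    have htcB : (Matrix.charpoly B).trailingCoeff =
        (-Complex.I)⁻¹ ^ n * (-Complex.I) ^ r * a := by
      rw [show B = (-Complex.I)⁻¹ • A by rw [inv_neg, Complex.inv_I, neg_neg, hB]]
      exact charpoly_inv_smul_trailingCoeff A (by simp [Complex.I_ne_zero])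
    have htcnB : (Matrix.charpoly (-B)).trailingCoeff =
        (Complex.I)⁻¹ ^ n * Complex.I ^ r * a := by
      rw [show -B = (Complex.I)⁻¹ • A by rw [Complex.inv_I, neg_smul, hB]]
      exact charpoly_inv_smul_trailingCoeff A Complex.I_ne_zero
    rw [htcB, htcnB, htcnegA]
    have h1 : (-Complex.I)⁻¹ * (Complex.I)⁻¹ = 1 := by
      rw [← mul_inv]; simp [Complex.I_mul_I]
    have h2 : (-Complex.I) * Complex.I = 1 := by simp [Complex.I_mul_I]
    have h3 : (-1 : ℂ)⁻¹ * (-1 : ℂ)⁻¹ = 1 := by norm_num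
    have h4 : (-1 : ℂ) * (-1 : ℂ) = 1 := by norm_num
    calc (-Complex.I)⁻¹ ^ n * (-Complex.I) ^ r * a *
          ((Complex.I)⁻¹ ^ n * Complex.I ^ r * a)
        = ((-Complex.I)⁻¹ * (Complex.I)⁻¹) ^ n * ((-Complex.I) * Complex.I) ^ r * a ^ 2 := by
          rw [mul_pow, mul_pow]; ring
      _ = a ^ 2 := by rw [h1, h2, one_pow, one_pow, one_mul, one_mul]
      _ = ((-1 : ℂ)⁻¹ * (-1 : ℂ)⁻¹) ^ n * ((-1 : ℂ) * (-1 : ℂ)) ^ r * a ^ 2 := by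
          rw [h3, h4, one_pow, one_pow, one_mul, one_mul]
      _ = ((-1 : ℂ)⁻¹ ^ n * (-1 : ℂ) ^ r * a) ^ 2 := by rw [mul_pow, mul_pow]; ring
  · -- skew-symmetric case
    have hAT : A.transpose = -A := by rw [hA, ← Matrix.transpose_map, h, map_neg']
    rw [hAT, mul_neg, neg_neg, ← trailingCoeff_comp_X_sq, charpoly_sq_comp,
      trailingCoeff_mul, show Matrix.charpoly A = Matrix.charpoly (-A) by
        rw [← hAT, charpoly_transpose'], sq]
end

section
/- Let ∂ ∈ ℝ^{n×n} with ∂² = 0. Then pdet(∂ + ∂ᵗ)² = pdet(∂∂ᵗ)², i.e., pdet(∂+∂ᵗ) = ± pdet(∂∂ᵗ). -/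
open Polynomial

namespace PdetAux

variable {n : ℕ}

/-- `det (1 + X • L)`, the reversed unsigned characteristic polynomial. -/
noncomputable def P (L : Matrix (Fin n) (Fin n) ℝ) : ℝ[X] :=
  Matrix.det (1 + (X : ℝ[X]) • L.map (C : ℝ → ℝ[X]))

lemma pdet_eq (L : Matrix (Fin n) (Fin n) ℝ) : pdet L = (P L).leadingCoeff := by
  rw [pdet, ← Polynomial.reverse_leadingCoeff, Matrix.reverse_charpoly, Matrix.charpolyRev, P]
  congr 2
  ext i j
  simp [Matrix.map_apply, sub_eq_add_neg]

lemma matP_add (A B : Matrix (Fin n) (Fin n) ℝ) (hAB : A * B = 0) :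
    (1 + (X : ℝ[X]) • A.map (C : ℝ → ℝ[X])) * (1 + (X : ℝ[X]) • B.map (C : ℝ → ℝ[X]))
      = 1 + (X : ℝ[X]) • (A + B).map (C : ℝ → ℝ[X]) := by
  have hz : ((X : ℝ[X]) • A.map (C : ℝ → ℝ[X])) * ((X : ℝ[X]) • B.map (C : ℝ → ℝ[X])) = 0 := by
    rw [Matrix.smul_mul, Matrix.mul_smul, ← Matrix.map_mul, hAB]
    have : (0 : Matrix (Fin n) (Fin n) ℝ).map (C : ℝ → ℝ[X]) = 0 := by ext i j; simp
    rw [this, smul_zero, smul_zero]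
  have hadd : (A + B).map (C : ℝ → ℝ[X])
      = A.map (C : ℝ → ℝ[X]) + B.map (C : ℝ → ℝ[X]) := by
    ext i j; simp
  rw [mul_add, mul_one, add_mul, one_mul, hz, add_zero, hadd, smul_add]
  abel

lemma pdet_add (A B : Matrix (Fin n) (Fin n) ℝ) (hAB : A * B = 0) :
    pdet (A + B) = pdet A * pdet B := by
  rw [pdet_eq, pdet_eq, pdet_eq, ← Polynomial.leadingCoeff_mul, P, P, P, ← Matrix.det_mul,
    matP_add A B hAB]

lemma pdet_mul_comm (A B : Matrix (Fin n) (Fin n) ℝ) :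
    pdet (A * B) = pdet (B * A) := by
  rw [pdet_eq, pdet_eq, P, P]
  congr 1
  have h1 : (X : ℝ[X]) • (A * B).map (C : ℝ → ℝ[X])
      = ((X : ℝ[X]) • A.map (C : ℝ → ℝ[X])) * B.map (C : ℝ → ℝ[X]) := by
    rw [Matrix.smul_mul, ← Matrix.map_mul]
  have h2 : (X : ℝ[X]) • (B * A).map (C : ℝ → ℝ[X])
      = B.map (C : ℝ → ℝ[X]) * ((X : ℝ[X]) • A.map (C : ℝ → ℝ[X])) := by
    rw [Matrix.mul_smul, ← Matrix.map_mul]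
  rw [h1, h2, Matrix.det_one_add_mul_comm]

lemma map_neg' (A : Matrix (Fin n) (Fin n) ℝ) :
    (-A).map (C : ℝ → ℝ[X]) = -(A.map (C : ℝ → ℝ[X])) := by
  ext i j; simp

lemma pdet_neg_sq (A : Matrix (Fin n) (Fin n) ℝ) : (pdet (-A)) ^ 2 = (pdet A) ^ 2 := by
  rw [pdet_eq, pdet_eq]
  have hcomp : ∀ p : ℝ[X], p.comp (-X) = (aeval (-X : ℝ[X])).toRingHom p := fun p => by
    simp [Polynomial.comp, Polynomial.aeval_def, Polynomial.algebraMap_eq]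
  have key : P (-A) = (P A).comp (-X) := by
    rw [hcomp, P, P, RingHom.map_det]
    congr 1
    ext i j
    rcases eq_or_ne i j with rfl | hij
    · simp [Matrix.map_apply, Matrix.add_apply, Matrix.one_apply, Matrix.smul_apply]
    · simp [Matrix.map_apply, Matrix.add_apply, Matrix.one_apply, Matrix.smul_apply, hij]
  rcases eq_or_ne (P A) 0 with h0 | h0
  · simp [key, h0]
  · rw [key, Polynomial.leadingCoeff_comp (by simp), leadingCoeff_neg, leadingCoeff_X,
      mul_pow, ← pow_mul, mul_comm (P A).natDegree 2, pow_mul, neg_one_sq, one_pow, mul_one]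

lemma pdet_mul_pdet_neg (A : Matrix (Fin n) (Fin n) ℝ) :
    pdet A * pdet (-A) = pdet (-(A * A)) := by
  rw [pdet_eq, pdet_eq, pdet_eq, ← Polynomial.leadingCoeff_mul]
  have key : P A * P (-A) = Polynomial.expand ℝ 2 (P (-(A * A))) := by
    rw [P, P, P, ← Matrix.det_mul, map_neg', map_neg']
    show _ = (Polynomial.expand ℝ 2).toRingHom (Matrix.det _)
    rw [RingHom.map_det]
    congr 1
    have hmap : (A * A).map (C : ℝ → ℝ[X])
        = A.map (C : ℝ → ℝ[X]) * A.map (C : ℝ → ℝ[X]) := Matrix.map_mul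
    have hL : (1 + (X : ℝ[X]) • A.map (C : ℝ → ℝ[X]))
          * (1 + (X : ℝ[X]) • -(A.map (C : ℝ → ℝ[X])))
        = 1 - ((X : ℝ[X]) ^ 2) • ((A * A).map (C : ℝ → ℝ[X])) := by
      rw [smul_neg, ← sub_eq_add_neg, mul_sub, mul_one, add_mul, one_mul,
        Matrix.smul_mul, Matrix.mul_smul, smul_smul, ← pow_two, ← hmap]
      abel
    rw [hL]
    ext i j
    rcases eq_or_ne i j with rfl | hij
    · simp [-Matrix.map_mul, Matrix.map_apply, Matrix.sub_apply, Matrix.one_apply,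
        Matrix.smul_apply, Matrix.add_apply, Matrix.neg_apply, smul_eq_mul,
        Polynomial.expand_C, Polynomial.expand_X, pow_two, sub_eq_add_neg]
      ring
    · simp [-Matrix.map_mul, Matrix.map_apply, Matrix.sub_apply, Matrix.one_apply,
        Matrix.smul_apply, Matrix.add_apply, Matrix.neg_apply, smul_eq_mul,
        Polynomial.expand_C, Polynomial.expand_X, pow_two, hij, sub_eq_add_neg]
      ring
  rw [key, Polynomial.leadingCoeff_expand (by norm_num)]

end PdetAux

/-- If `∂² = 0` then `pdet (∂ + ∂ᵗ)² = pdet (∂∂ᵗ)²`, i.e.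
`pdet (∂ + ∂ᵗ) = ± pdet (∂∂ᵗ)`. -/
theorem pdet_dirac_sq_eq_pdet_laplacian_sq {n : ℕ}
    (M : Matrix (Fin n) (Fin n) ℝ) (h : M * M = 0) :
    (pdet (M + M.transpose)) ^ 2 = (pdet (M * M.transpose)) ^ 2 := by
  set D := M + M.transpose with hD
  have ht : M.transpose * M.transpose = 0 := by
    rw [← Matrix.transpose_mul, h, Matrix.transpose_zero]
  have hD2 : D * D = M * M.transpose + M.transpose * M := by
    rw [hD, add_mul, mul_add, mul_add, h, ht, zero_add, add_zero]
  have hAB : (M * M.transpose) * (M.transpose * M) = 0 := by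
    rw [mul_assoc, ← mul_assoc M.transpose, ht, zero_mul, mul_zero]
  have e1 : pdet (D * D) = pdet (M * M.transpose) * pdet (M.transpose * M) := by
    rw [hD2]; exact PdetAux.pdet_add _ _ hAB
  have e2 : pdet (M.transpose * M) = pdet (M * M.transpose) := PdetAux.pdet_mul_comm _ _
  have e3 : pdet D * pdet (-D) = pdet (-(D * D)) := PdetAux.pdet_mul_pdet_neg D
  have e4 : (pdet D) ^ 2 * (pdet D) ^ 2 = ((pdet (M * M.transpose)) ^ 2) ^ 2 := by
    calc (pdet D) ^ 2 * (pdet D) ^ 2 = (pdet D) ^ 2 * (pdet (-D)) ^ 2 := by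
          rw [PdetAux.pdet_neg_sq]
      _ = (pdet D * pdet (-D)) ^ 2 := by ring
      _ = (pdet (-(D * D))) ^ 2 := by rw [e3]
      _ = (pdet (D * D)) ^ 2 := PdetAux.pdet_neg_sq _
      _ = ((pdet (M * M.transpose)) ^ 2) ^ 2 := by rw [e1, e2]; ring
  nlinarith [sq_nonneg (pdet D), sq_nonneg (pdet (M * M.transpose)),
    sq_nonneg ((pdet D) ^ 2 - (pdet (M * M.transpose)) ^ 2),
    sq_nonneg ((pdet D) ^ 2 + (pdet (M * M.transpose)) ^ 2)]
end

section
/- Let ∂ = ∂_k be the k-th simplicial boundary map of the full simplex on n = 2k+1 vertices, viewed as a C(n,k+1)×C(n,k+1) matrix from k-faces to (k-1)-faces (via the bijection between k-faces and (k-1)-faces given by complementation). Then ∂∂ᵗ has characteristic polynomial det(tI − ∂∂ᵗ) = t^B·(t − n)^C, where B = C(n−1, k+1) and C = C(n−1, k); in particular ∂∂ᵗ has single nonzero eigenvalue n with multiplicity C(2k, k). -/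
open Polynomial Finset

section
variable {n : ℕ}
def cnt (S : Finset (Fin n)) (v : Fin n) : ℕ := (S.filter (fun w => w < v)).card

lemma cnt_insert_self (S : Finset (Fin n)) (v : Fin n) : cnt (insert v S) v = cnt S v := by
  unfold cnt
  rw [Finset.filter_insert, if_neg (lt_irrefl v)]

lemma cnt_insert (S : Finset (Fin n)) {u : Fin n} (hu : u ∉ S) (v : Fin n) :
    cnt (insert u S) v = cnt S v + if u < v then 1 else 0 := by
  unfold cnt
  rw [Finset.filter_insert]
  split
  · rw [Finset.card_insert_of_notMem (fun h => hu (Finset.mem_of_mem_filter u h))]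
  · simp

lemma cnt_erase (S : Finset (Fin n)) {u : Fin n} (hu : u ∈ S) (v : Fin n) :
    cnt S v = cnt (S.erase u) v + if u < v then 1 else 0 := by
  conv_lhs => rw [← Finset.insert_erase hu]
  exact cnt_insert _ (Finset.notMem_erase u S) v

lemma pow_flip {u v : Fin n} (h : u ≠ v) (a b : ℕ) :
    ((-1:ℝ))^(a + if v < u then 1 else 0) * ((-1:ℝ))^(b + if u < v then 1 else 0)
      = -(((-1:ℝ))^a * ((-1:ℝ))^b) := by
  rcases lt_or_gt_of_ne h with h' | h'
  · simp [h', asymm h', pow_succ]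
  · simp [h', asymm h', pow_succ]

lemma sum_subtype_ite {m : ℕ} {T : Finset (Fin n)} (hT : T.card = m) (f : Finset (Fin n) → ℝ) :
    ∑ s : {s : Finset (Fin n) // s.card = m}, (if s.1 = T then f s.1 else 0) = f T := by
  rw [Fintype.sum_eq_single (⟨T, hT⟩ : {s : Finset (Fin n) // s.card = m})]
  · simp
  · intro x hx
    rw [if_neg (by simpa [Subtype.ext_iff] using hx)]

lemma ite_split {α : Type*} [DecidableEq α] (a b : α) (C : Prop) [Decidable C] (x : ℝ) :
    (if C then x else 0) = (if a = b ∧ C then x else 0) + (if a ≠ b ∧ C then x else 0) := by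
  by_cases hab : a = b <;> by_cases hC : C <;> simp [hab, hC]
end

/-- The middle boundary map of the simplex on `n = 2k+1` vertices, written as a
square matrix whose columns are indexed by `k`-faces (i.e. `(k+1)`-subsets of the
vertex set) and whose rows are indexed by `(k-1)`-faces via the complementation
bijection: the row labelled by the `(k+1)`-subset `σ` stands for the `(k-1)`-face
`σᶜ`.  The entry in row `σ`, column `τ` is the signed incidence number of the
face `σᶜ` in `∂τ = Σⱼ (-1)^(j-1) (τ ∖ {vⱼ})`. -/
noncomputable def simplexMiddleBoundary (k : ℕ) :
    Matrix {s : Finset (Fin (2 * k + 1)) // s.card = k + 1}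
           {s : Finset (Fin (2 * k + 1)) // s.card = k + 1} ℝ :=
  fun σ τ => ∑ v ∈ τ.1,
    if τ.1.erase v = (σ.1)ᶜ then (-1 : ℝ) ^ ((τ.1.filter (fun w => w < v)).card) else 0

namespace SimplexAux

variable {k : ℕ}

local notation "N" => 2 * k + 1

abbrev F (k m : ℕ) := {s : Finset (Fin (2 * k + 1)) // s.card = m}

/-- the up (coboundary-style) matrix -/
noncomputable def up (k : ℕ) : Matrix (F k (k+1)) (F k (k+2)) ℝ :=
  fun τ R => ∑ v ∈ R.1, if R.1.erase v = τ.1 then (-1 : ℝ) ^ (cnt R.1 v) else 0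

/-- boundary entry as a function of the underlying sets -/
noncomputable def bnd (S s : Finset (Fin N)) : ℝ :=
  ∑ v ∈ s, if s.erase v = Sᶜ then (-1 : ℝ) ^ (cnt s v) else 0

lemma boundary_eq_bnd (σ τ : F k (k+1)) :
    simplexMiddleBoundary k σ τ = bnd σ.1 τ.1 := rfl

/-- off-diagonal kernel for `Mᵀ*M` -/
noncomputable def G (τ τ' : Finset (Fin N)) (p : Fin N × Fin N) : ℝ :=
  if p.1 ∈ τ ∧ p.2 ∈ τ' ∧ p.1 ≠ p.2 ∧ τ'.erase p.2 = τ.erase p.1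
  then (-1 : ℝ) ^ (cnt τ p.1 + cnt τ' p.2) else 0

/-- off-diagonal kernel for `up*upᵀ` -/
noncomputable def H (τ τ' : Finset (Fin N)) (p : Fin N × Fin N) : ℝ :=
  if p.1 ∉ τ ∧ p.2 ∈ insert p.1 τ ∧ p.1 ≠ p.2 ∧ (insert p.1 τ).erase p.2 = τ'
  then (-1 : ℝ) ^ (cnt (insert p.1 τ) p.1 + cnt (insert p.1 τ) p.2) else 0

lemma G_eq_neg_H (τ τ' : Finset (Fin N)) (p : Fin N × Fin N) :
    G τ τ' p = - H τ τ' p.swap := by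
  obtain ⟨v, v'⟩ := p
  simp only [G, H, Prod.swap_prod_mk]
  by_cases hc : v ∈ τ ∧ v' ∈ τ' ∧ v ≠ v' ∧ τ'.erase v' = τ.erase v
  · obtain ⟨hv, hv', hne, he⟩ := hc
    have hv'τ : v' ∉ τ := by
      intro hmem
      have : v' ∈ τ.erase v := Finset.mem_erase.2 ⟨hne.symm, hmem⟩
      rw [← he] at this
      exact (Finset.notMem_erase v' τ') this
    have hins : (insert v' τ).erase v = τ' := by
      rw [Finset.erase_insert_of_ne hne.symm, ← he, Finset.insert_erase hv']
    rw [if_pos ⟨hv, hv', hne, he⟩, if_pos ⟨hv'τ, Finset.mem_insert_of_mem hv, hne.symm, hins⟩]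
    -- sign computation
    have h1 : cnt (insert v' τ) v' = cnt τ' v' + if v < v' then 1 else 0 := by
      rw [cnt_insert_self, cnt_erase τ hv v', ← hins, Finset.erase_insert_of_ne hne.symm,
        cnt_insert_self]
    have h2 : cnt (insert v' τ) v = cnt τ v + if v' < v then 1 else 0 :=
      cnt_insert τ hv'τ v
    rw [h1, h2]
    rcases lt_or_gt_of_ne hne with h' | h' <;>
      · simp only [h', asymm h', if_pos, if_neg, not_lt_of_gt, ite_true, ite_false,
          add_zero, pow_add, pow_succ, pow_zero]
        ring
  · rw [if_neg hc, if_neg, neg_zero]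
    intro ⟨h1, h2, h3, h4⟩
    apply hc
    have hv : v ∈ τ := by
      rcases Finset.mem_insert.1 h2 with h | h
      · exact absurd h.symm h3
      · exact h
    have hv' : v' ∈ τ' := by
      rw [← h4]
      exact Finset.mem_erase.2 ⟨h3, Finset.mem_insert_self v' τ⟩
    refine ⟨hv, hv', fun h => h3 h.symm, ?_⟩
    rw [← h4, Finset.erase_insert_of_ne h3,
      Finset.erase_insert (fun hm => h1 (Finset.mem_of_mem_erase hm))]

lemma MtM_entry (τ τ' : F k (k+1)) :
    ((simplexMiddleBoundary k).transpose * simplexMiddleBoundary k) τ τ'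
      = (if τ = τ' then ((k : ℝ) + 1) else 0) + ∑ p : Fin N × Fin N, G τ.1 τ'.1 p := by
  rw [Matrix.mul_apply]
  simp only [Matrix.transpose_apply, boundary_eq_bnd]
  have step1 : ∑ σ : F k (k+1), bnd σ.1 τ.1 * bnd σ.1 τ'.1
      = ∑ v ∈ τ.1, ∑ v' ∈ τ'.1,
          (if τ'.1.erase v' = τ.1.erase v
           then (-1:ℝ) ^ (cnt τ.1 v + cnt τ'.1 v') else 0) := by
    unfold bnd
    have expand : ∀ σ : F k (k+1),
        (∑ v ∈ τ.1, if τ.1.erase v = (σ.1)ᶜ then (-1:ℝ) ^ (cnt τ.1 v) else 0) *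
        (∑ v' ∈ τ'.1, if τ'.1.erase v' = (σ.1)ᶜ then (-1:ℝ) ^ (cnt τ'.1 v') else 0)
        = ∑ v ∈ τ.1, ∑ v' ∈ τ'.1,
            (if τ.1.erase v = (σ.1)ᶜ then (-1:ℝ) ^ (cnt τ.1 v) else 0) *
            (if τ'.1.erase v' = (σ.1)ᶜ then (-1:ℝ) ^ (cnt τ'.1 v') else 0) := fun σ =>
      Finset.sum_mul_sum _ _ _ _
    rw [Finset.sum_congr rfl (fun σ _ => expand σ), Finset.sum_comm]
    refine Finset.sum_congr rfl (fun v hv => ?_)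
    rw [Finset.sum_comm]
    refine Finset.sum_congr rfl (fun v' hv' => ?_)
    have hcard : ((τ.1.erase v)ᶜ).card = k + 1 := by
      rw [Finset.card_compl, Finset.card_erase_of_mem hv, τ.2, Fintype.card_fin]
      omega
    have pointwise : ∀ σ : F k (k+1),
        (if τ.1.erase v = (σ.1)ᶜ then (-1:ℝ) ^ (cnt τ.1 v) else 0) *
        (if τ'.1.erase v' = (σ.1)ᶜ then (-1:ℝ) ^ (cnt τ'.1 v') else 0)
        = if σ.1 = (τ.1.erase v)ᶜ
          then (if τ'.1.erase v' = ((σ.1 : Finset (Fin N)))ᶜ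
                then (-1:ℝ) ^ (cnt τ.1 v + cnt τ'.1 v') else 0)
          else 0 := by
      intro σ
      by_cases h : σ.1 = (τ.1.erase v)ᶜ
      · have h' : τ.1.erase v = (σ.1)ᶜ := by rw [h, compl_compl]
        rw [if_pos h', if_pos h, pow_add]
        split_ifs <;> ring
      · have h' : ¬ (τ.1.erase v = (σ.1)ᶜ) := fun hh => h (by rw [hh, compl_compl])
        rw [if_neg h', if_neg h, zero_mul]
    rw [Finset.sum_congr rfl (fun σ _ => pointwise σ)]
    have := sum_subtype_ite (n := N) (m := k+1) hcard
      (fun s => if τ'.1.erase v' = sᶜ then (-1:ℝ) ^ (cnt τ.1 v + cnt τ'.1 v') else 0)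
    rw [this, compl_compl]
  rw [step1]
  have split : ∀ v ∈ τ.1, ∀ v' ∈ τ'.1,
      (if τ'.1.erase v' = τ.1.erase v then (-1:ℝ) ^ (cnt τ.1 v + cnt τ'.1 v') else 0)
      = (if v = v' ∧ τ'.1.erase v' = τ.1.erase v
          then (-1:ℝ) ^ (cnt τ.1 v + cnt τ'.1 v') else 0)
        + G τ.1 τ'.1 (v, v') := by
    intro v hv v' hv'
    rw [ite_split v v']
    congr 1
    unfold G
    by_cases hne : v = v' <;> by_cases hcond : τ'.1.erase v' = τ.1.erase v <;>
      simp [hne, hcond, hv, hv']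
  rw [Finset.sum_congr rfl (fun v hv => Finset.sum_congr rfl (fun v' hv' => split v hv v' hv')),
    Finset.sum_congr rfl (fun v _ => Finset.sum_add_distrib), Finset.sum_add_distrib]
  congr 1
  · -- diagonal part
    by_cases hττ : τ = τ'
    · subst hττ
      rw [if_pos rfl]
      have inner : ∀ v ∈ τ.1,
          (∑ v' ∈ τ.1, if v = v' ∧ τ.1.erase v' = τ.1.erase v
            then (-1:ℝ) ^ (cnt τ.1 v + cnt τ.1 v') else 0) = 1 := by
        intro v hv
        have : ∀ v' ∈ τ.1,
            (if v = v' ∧ τ.1.erase v' = τ.1.erase v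
              then (-1:ℝ) ^ (cnt τ.1 v + cnt τ.1 v') else 0)
            = if v = v' then 1 else 0 := by
          intro v' _
          by_cases hvv : v = v'
          · subst hvv
            rw [if_pos ⟨rfl, rfl⟩, if_pos rfl, Even.neg_one_pow ⟨cnt τ.1 v, rfl⟩]
          · rw [if_neg (fun h => hvv h.1), if_neg hvv]
        rw [Finset.sum_congr rfl this, Finset.sum_ite_eq τ.1 v (fun _ => (1:ℝ)), if_pos hv]
      rw [Finset.sum_congr rfl inner, Finset.sum_const, τ.2]
      push_cast
      ring
    · rw [if_neg hττ]
      refine Finset.sum_eq_zero (fun v hv => Finset.sum_eq_zero (fun v' hv' => ?_))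
      rw [if_neg]
      rintro ⟨rfl, hcond⟩
      apply hττ
      apply Subtype.ext
      rw [← Finset.insert_erase hv, ← Finset.insert_erase hv', hcond]
  · -- off-diagonal part
    rw [Fintype.sum_prod_type]
    rw [← Finset.sum_subset (Finset.subset_univ τ.1) (fun v _ hv => Finset.sum_eq_zero
      (fun v' _ => by unfold G; rw [if_neg (fun h => hv h.1)]))]
    refine Finset.sum_congr rfl (fun v hv => ?_)
    rw [← Finset.sum_subset (Finset.subset_univ τ'.1)
      (fun v' _ hv' => by unfold G; rw [if_neg (fun h => hv' h.2.1)])]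

lemma up_full (τ : F k (k+1)) (R : F k (k+2)) :
    up k τ R = ∑ u : Fin N,
      if u ∈ R.1 ∧ R.1.erase u = τ.1 then (-1:ℝ) ^ (cnt R.1 u) else 0 := by
  unfold up
  rw [← Finset.sum_subset (Finset.subset_univ R.1)
    (fun u _ hu => by rw [if_neg (fun h => hu h.1)])]
  exact Finset.sum_congr rfl (fun u hu => by
    by_cases h : R.1.erase u = τ.1 <;> simp [h, hu])

lemma upup_entry (τ τ' : F k (k+1)) :
    (up k * (up k).transpose) τ τ'
      = (if τ = τ' then (k : ℝ) else 0) + ∑ p : Fin N × Fin N, H τ.1 τ'.1 p := by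
  rw [Matrix.mul_apply]
  simp only [Matrix.transpose_apply, up_full]
  have expand : ∀ R : F k (k+2),
      (∑ u : Fin N, if u ∈ R.1 ∧ R.1.erase u = τ.1 then (-1:ℝ) ^ (cnt R.1 u) else 0) *
      (∑ u' : Fin N, if u' ∈ R.1 ∧ R.1.erase u' = τ'.1 then (-1:ℝ) ^ (cnt R.1 u') else 0)
      = ∑ u : Fin N, ∑ u' : Fin N,
          (if u ∈ R.1 ∧ R.1.erase u = τ.1 then (-1:ℝ) ^ (cnt R.1 u) else 0) *
          (if u' ∈ R.1 ∧ R.1.erase u' = τ'.1 then (-1:ℝ) ^ (cnt R.1 u') else 0) := fun R =>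
    Finset.sum_mul_sum _ _ _ _
  rw [Finset.sum_congr rfl (fun R _ => expand R), Finset.sum_comm,
    Finset.sum_congr rfl (fun (u : Fin N) _ => Finset.sum_comm)]
  have inner : ∀ u : Fin N,
      (∑ u' : Fin N, ∑ R : F k (k+2),
        (if u ∈ R.1 ∧ R.1.erase u = τ.1 then (-1:ℝ) ^ (cnt R.1 u) else 0) *
        (if u' ∈ R.1 ∧ R.1.erase u' = τ'.1 then (-1:ℝ) ^ (cnt R.1 u') else 0))
      = ∑ u' : Fin N,
          (if u ∉ τ.1 ∧ u' ∈ insert u τ.1 ∧ (insert u τ.1).erase u' = τ'.1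
            then (-1:ℝ) ^ (cnt (insert u τ.1) u + cnt (insert u τ.1) u') else 0) := by
    intro u
    refine Finset.sum_congr rfl (fun u' _ => ?_)
    by_cases hu : u ∈ τ.1
    · rw [if_neg (fun h => h.1 hu)]
      refine Finset.sum_eq_zero (fun R _ => ?_)
      rw [if_neg, zero_mul]
      rintro ⟨h1, h2⟩
      rw [← h2] at hu
      exact Finset.notMem_erase u R.1 hu
    · have hcard : (insert u τ.1).card = k + 2 := by
        rw [Finset.card_insert_of_notMem hu, τ.2]
      have pointwise : ∀ R : F k (k+2),
          (if u ∈ R.1 ∧ R.1.erase u = τ.1 then (-1:ℝ) ^ (cnt R.1 u) else 0) *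
          (if u' ∈ R.1 ∧ R.1.erase u' = τ'.1 then (-1:ℝ) ^ (cnt R.1 u') else 0)
          = if R.1 = insert u τ.1
            then (if u' ∈ R.1 ∧ R.1.erase u' = τ'.1
                  then (-1:ℝ) ^ (cnt R.1 u + cnt R.1 u') else 0)
            else 0 := by
        intro R
        by_cases h : R.1 = insert u τ.1
        · have h1 : u ∈ R.1 := by rw [h]; exact Finset.mem_insert_self u τ.1
          have h2 : R.1.erase u = τ.1 := by rw [h, Finset.erase_insert hu]
          rw [if_pos ⟨h1, h2⟩, if_pos h, pow_add]
          split_ifs <;> ring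
        · rw [if_neg, zero_mul, if_neg h]
          rintro ⟨h1, h2⟩
          exact h (by rw [← h2, Finset.insert_erase h1])
      rw [Finset.sum_congr rfl (fun R _ => pointwise R)]
      have := sum_subtype_ite (n := N) (m := k+2) hcard
        (fun s => if u' ∈ s ∧ s.erase u' = τ'.1
                  then (-1:ℝ) ^ (cnt s u + cnt s u') else 0)
      rw [this]
      by_cases h3 : u' ∈ insert u τ.1 ∧ (insert u τ.1).erase u' = τ'.1
      · rw [if_pos h3, if_pos ⟨hu, h3⟩]
      · rw [if_neg h3, if_neg (fun h => h3 ⟨h.2.1, h.2.2⟩)]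
  rw [Finset.sum_congr rfl (fun u _ => inner u)]
  have split : ∀ u u' : Fin N,
      (if u ∉ τ.1 ∧ u' ∈ insert u τ.1 ∧ (insert u τ.1).erase u' = τ'.1
        then (-1:ℝ) ^ (cnt (insert u τ.1) u + cnt (insert u τ.1) u') else 0)
      = (if u = u' ∧ (u ∉ τ.1 ∧ u' ∈ insert u τ.1 ∧ (insert u τ.1).erase u' = τ'.1)
          then (-1:ℝ) ^ (cnt (insert u τ.1) u + cnt (insert u τ.1) u') else 0)
        + H τ.1 τ'.1 (u, u') := by
    intro u u'
    rw [ite_split u u']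
    congr 1
    unfold H
    by_cases hne : u = u' <;>
      by_cases hcond : u ∉ τ.1 ∧ u' ∈ insert u τ.1 ∧ (insert u τ.1).erase u' = τ'.1 <;>
      · first
        | (rw [if_pos, if_pos] <;> tauto)
        | (rw [if_neg, if_neg] <;> tauto)
  rw [Finset.sum_congr rfl (fun u _ => Finset.sum_congr rfl (fun u' _ => split u u')),
    Finset.sum_congr rfl (fun u _ => Finset.sum_add_distrib), Finset.sum_add_distrib]
  congr 1
  · -- diagonal part
    have diag : ∀ u : Fin N,
        (∑ u' : Fin N,
          if u = u' ∧ (u ∉ τ.1 ∧ u' ∈ insert u τ.1 ∧ (insert u τ.1).erase u' = τ'.1)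
          then (-1:ℝ) ^ (cnt (insert u τ.1) u + cnt (insert u τ.1) u') else 0)
        = if u ∉ τ.1 ∧ τ.1 = τ'.1 then 1 else 0 := by
      intro u
      have : ∀ u' : Fin N,
          (if u = u' ∧ (u ∉ τ.1 ∧ u' ∈ insert u τ.1 ∧ (insert u τ.1).erase u' = τ'.1)
            then (-1:ℝ) ^ (cnt (insert u τ.1) u + cnt (insert u τ.1) u') else 0)
          = if u = u' then (if u ∉ τ.1 ∧ τ.1 = τ'.1 then 1 else 0) else 0 := by
        intro u'
        by_cases hvv : u = u'
        · subst hvv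
          by_cases hu : u ∈ τ.1
          · rw [if_neg (fun h => h.2.1 hu), if_pos rfl, if_neg (fun h => h.1 hu)]
          · by_cases hee : τ.1 = τ'.1
            · rw [if_pos ⟨rfl, hu, Finset.mem_insert_self u τ.1,
                by rw [Finset.erase_insert hu, hee]⟩, if_pos rfl, if_pos ⟨hu, hee⟩,
                Even.neg_one_pow ⟨cnt (insert u τ.1) u, rfl⟩]
            · rw [if_neg, if_pos rfl, if_neg (fun h => hee h.2)]
              rintro ⟨-, -, -, h4⟩
              exact hee (by rw [← h4, Finset.erase_insert hu])
        · rw [if_neg (fun h => hvv h.1), if_neg hvv]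
      rw [Finset.sum_congr rfl (fun u' _ => this u'), Finset.sum_ite_eq univ u
        (fun _ => if u ∉ τ.1 ∧ τ.1 = τ'.1 then (1:ℝ) else 0), if_pos (Finset.mem_univ u)]
    rw [Finset.sum_congr rfl (fun u _ => diag u)]
    by_cases hττ : τ = τ'
    · rw [if_pos hττ]
      have : ∀ u : Fin N, (if u ∉ τ.1 ∧ τ.1 = τ'.1 then (1:ℝ) else 0)
          = if u ∈ (τ.1)ᶜ then 1 else 0 := by
        intro u
        have : τ.1 = τ'.1 := by rw [hττ]
        by_cases hu : u ∈ τ.1 <;> simp [hu, this, Finset.mem_compl]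
      rw [Finset.sum_congr rfl (fun u _ => this u), Finset.sum_ite_mem, Finset.univ_inter,
        Finset.sum_const, Finset.card_compl, τ.2, Fintype.card_fin]
      have : 2 * k + 1 - (k + 1) = k := by omega
      rw [this]
      simp
    · rw [if_neg hττ]
      refine Finset.sum_eq_zero (fun u _ => ?_)
      rw [if_neg (fun h => hττ (Subtype.ext h.2))]
  · -- off-diagonal part
    rw [Fintype.sum_prod_type]

lemma laplacian_identity :
    (simplexMiddleBoundary k).transpose * simplexMiddleBoundary k + up k * (up k).transpose
      = (((2 * k + 1 : ℕ) : ℝ)) • (1 : Matrix (F k (k+1)) (F k (k+1)) ℝ) := by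
  ext τ τ'
  rw [Matrix.add_apply, MtM_entry, upup_entry]
  have hGH : ∑ p : Fin N × Fin N, G τ.1 τ'.1 p
      = - ∑ p : Fin N × Fin N, H τ.1 τ'.1 p := by
    rw [Finset.sum_congr rfl (fun p _ => G_eq_neg_H τ.1 τ'.1 p)]
    rw [Fintype.sum_equiv (Equiv.prodComm _ _)
      (fun p => - H τ.1 τ'.1 p.swap) (fun p => - H τ.1 τ'.1 p) (fun p => rfl)]
    rw [Finset.sum_neg_distrib]
  rw [hGH]
  by_cases hττ : τ = τ' <;>
    simp [hττ, Matrix.smul_apply, Matrix.one_apply] <;> push_cast <;> ring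

/-- the kernel appearing in `∂ ∘ up` -/
noncomputable def W (S R' : Finset (Fin N)) (p : Fin N × Fin N) : ℝ :=
  if p.1 ∈ R' ∧ p.2 ∈ R' ∧ p.2 ≠ p.1 ∧ (R'.erase p.1).erase p.2 = Sᶜ
  then (-1:ℝ) ^ (cnt (R'.erase p.1) p.2 + cnt R' p.1) else 0

lemma W_swap (S R' : Finset (Fin N)) (p : Fin N × Fin N) :
    W S R' p = - W S R' p.swap := by
  obtain ⟨u, v⟩ := p
  simp only [W, Prod.swap_prod_mk]
  by_cases hc : u ∈ R' ∧ v ∈ R' ∧ v ≠ u ∧ (R'.erase u).erase v = Sᶜ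
  · obtain ⟨hu, hv, hne, he⟩ := hc
    rw [if_pos ⟨hu, hv, hne, he⟩, if_pos ⟨hv, hu, hne.symm, by
      rw [Finset.erase_right_comm]; exact he⟩]
    have h1 : cnt R' u = cnt (R'.erase v) u + if v < u then 1 else 0 := cnt_erase R' hv u
    have h2 : cnt R' v = cnt (R'.erase u) v + if u < v then 1 else 0 := cnt_erase R' hu v
    rw [h1, h2]
    rcases lt_or_gt_of_ne hne with h' | h' <;>
      · simp only [h', asymm h', if_pos, if_neg, not_lt_of_gt, ite_true, ite_false,
          add_zero, pow_add, pow_succ, pow_zero]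
        ring
  · rw [if_neg hc, if_neg, neg_zero]
    rintro ⟨h1, h2, h3, h4⟩
    exact hc ⟨h2, h1, h3.symm, by rw [Finset.erase_right_comm]; exact h4⟩

lemma boundary_mul_up : simplexMiddleBoundary k * up k = 0 := by
  ext σ R
  rw [Matrix.mul_apply, Matrix.zero_apply]
  simp only [up_full, boundary_eq_bnd, Finset.mul_sum]
  rw [Finset.sum_comm]
  have inner : ∀ u : Fin N,
      (∑ τ : F k (k+1), bnd σ.1 τ.1 *
        (if u ∈ R.1 ∧ R.1.erase u = τ.1 then (-1:ℝ) ^ (cnt R.1 u) else 0))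
      = ∑ v : Fin N, W σ.1 R.1 (u, v) := by
    intro u
    by_cases hu : u ∈ R.1
    · have hcard : (R.1.erase u).card = k + 1 := by
        rw [Finset.card_erase_of_mem hu, R.2]
        omega
      have pointwise : ∀ τ : F k (k+1),
          bnd σ.1 τ.1 * (if u ∈ R.1 ∧ R.1.erase u = τ.1 then (-1:ℝ) ^ (cnt R.1 u) else 0)
          = if τ.1 = R.1.erase u then bnd σ.1 τ.1 * (-1:ℝ) ^ (cnt R.1 u) else 0 := by
        intro τ
        by_cases h : τ.1 = R.1.erase u
        · rw [if_pos ⟨hu, h.symm⟩, if_pos h]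
        · rw [if_neg (fun hh => h hh.2.symm), mul_zero, if_neg h]
      rw [Finset.sum_congr rfl (fun τ _ => pointwise τ)]
      have := sum_subtype_ite (n := N) (m := k+1) hcard
        (fun s => bnd σ.1 s * (-1:ℝ) ^ (cnt R.1 u))
      rw [this]
      -- now expand bnd of the erased set
      unfold bnd
      rw [Finset.sum_mul]
      rw [← Finset.sum_subset (Finset.subset_univ (R.1.erase u)) (fun v _ hv => by
        unfold W
        rw [if_neg]
        rintro ⟨-, h2, h3, -⟩
        exact hv (Finset.mem_erase.2 ⟨h3, h2⟩))]
      refine Finset.sum_congr rfl (fun v hv => ?_)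
      obtain ⟨hvu, hvR⟩ := Finset.mem_erase.1 hv
      unfold W
      by_cases h : (R.1.erase u).erase v = (σ.1)ᶜ
      · rw [if_pos h, if_pos ⟨hu, hvR, hvu, h⟩, pow_add]
      · rw [if_neg h, zero_mul, if_neg (fun hh => h hh.2.2.2)]
    · rw [Finset.sum_eq_zero (fun τ _ => by rw [if_neg (fun h => hu h.1), mul_zero])]
      rw [Finset.sum_eq_zero (fun v _ => ?_)]
      unfold W
      rw [if_neg (fun h => hu h.1)]
  rw [Finset.sum_congr rfl (fun u _ => inner u), ← Fintype.sum_prod_type]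
  have h : ∑ p : Fin N × Fin N, W σ.1 R.1 p = - ∑ p : Fin N × Fin N, W σ.1 R.1 p := by
    nth_rewrite 1 [Finset.sum_congr rfl (fun p _ => W_swap σ.1 R.1 p)]
    rw [Fintype.sum_equiv (Equiv.prodComm _ _)
      (fun p => - W σ.1 R.1 p.swap) (fun p => - W σ.1 R.1 p) (fun p => rfl)]
    rw [Finset.sum_neg_distrib]
  linarith

lemma MMt_sq :
    (simplexMiddleBoundary k * (simplexMiddleBoundary k).transpose) *
      (simplexMiddleBoundary k * (simplexMiddleBoundary k).transpose)
    = (((2 * k + 1 : ℕ) : ℝ)) •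
        (simplexMiddleBoundary k * (simplexMiddleBoundary k).transpose) := by
  set M := simplexMiddleBoundary k
  have h1 : M.transpose * M
      = (((2 * k + 1 : ℕ) : ℝ)) • (1 : Matrix (F k (k+1)) (F k (k+1)) ℝ)
        - up k * (up k).transpose := by
    rw [← laplacian_identity]
    abel
  have h2 : (up k).transpose * M.transpose = 0 := by
    have := congrArg Matrix.transpose (boundary_mul_up (k := k))
    rwa [Matrix.transpose_mul, Matrix.transpose_zero] at this
  calc (M * M.transpose) * (M * M.transpose)
      = M * (M.transpose * M) * M.transpose := by
        rw [Matrix.mul_assoc, Matrix.mul_assoc, Matrix.mul_assoc]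
    _ = _ := by
        rw [h1, Matrix.mul_sub, Matrix.sub_mul, Matrix.mul_smul, Matrix.mul_one,
          Matrix.smul_mul, Matrix.mul_assoc (simplexMiddleBoundary k) (up k * (up k).transpose),
          Matrix.mul_assoc (up k), h2, Matrix.mul_zero, Matrix.mul_zero, sub_zero]

lemma MtM_diag (τ : F k (k+1)) :
    ((simplexMiddleBoundary k).transpose * simplexMiddleBoundary k) τ τ = (k : ℝ) + 1 := by
  rw [MtM_entry, if_pos rfl]
  rw [Finset.sum_eq_zero (fun p _ => ?_), add_zero]
  unfold G
  rw [if_neg]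
  rintro ⟨h1, h2, h3, h4⟩
  have : p.2 ∈ τ.1.erase p.1 := Finset.mem_erase.2 ⟨fun h => h3 h.symm, h2⟩
  rw [← h4] at this
  exact Finset.notMem_erase p.2 τ.1 this

lemma charpoly_conj_diag {m : Type*} [Fintype m] [DecidableEq m]
    (V W : Matrix m m ℝ) (hVW : V * W = 1) (d : m → ℝ) :
    (V * Matrix.diagonal d * W).charpoly = ∏ i, (X - C (d i)) := by
  let Φ := (C : ℝ →+* ℝ[X]).mapMatrix (m := m)
  have hch : Matrix.charmatrix (V * Matrix.diagonal d * W)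
      = Φ V * Matrix.charmatrix (Matrix.diagonal d) * Φ W := by
    unfold Matrix.charmatrix
    rw [Matrix.mul_sub, Matrix.sub_mul]
    congr 1
    · have hc : Commute (Matrix.scalar m (X : ℝ[X])) (Φ V) :=
        (Matrix.scalar_commute (X : ℝ[X]) (fun r' => Commute.all X r') (Φ V))
      rw [← hc.eq, Matrix.mul_assoc, ← map_mul Φ, hVW, map_one, Matrix.mul_one]
    · rw [← map_mul Φ, ← map_mul Φ]
  have hdet : (V * Matrix.diagonal d * W).charpoly
      = (Matrix.charmatrix (Matrix.diagonal d)).det := by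
    rw [Matrix.charpoly, hch, Matrix.det_mul, Matrix.det_mul]
    have : (Φ V).det * (Matrix.charmatrix (Matrix.diagonal d)).det * (Φ W).det
        = (Matrix.charmatrix (Matrix.diagonal d)).det * ((Φ V).det * (Φ W).det) := by ring
    rw [this, ← Matrix.det_mul, ← map_mul Φ, hVW, map_one, Matrix.det_one, mul_one]
  rw [hdet]
  have : Matrix.charmatrix (Matrix.diagonal d) = Matrix.diagonal (fun i => (X : ℝ[X]) - C (d i)) := by
    ext i j
    by_cases h : i = j
    · subst h; simp
    · rw [Matrix.charmatrix_apply_ne _ _ _ h, Matrix.diagonal_apply_ne _ h,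
        Matrix.diagonal_apply_ne _ h, map_zero, neg_zero]
  rw [this, Matrix.det_diagonal]

theorem main_charpoly (k : ℕ) :
    (simplexMiddleBoundary k * (simplexMiddleBoundary k).transpose).charpoly
      = Polynomial.X ^ (Nat.choose (2 * k) (k + 1))
        * (Polynomial.X - Polynomial.C ((2 * k + 1 : ℕ) : ℝ)) ^ (Nat.choose (2 * k) k) := by
  classical
  set A := simplexMiddleBoundary k * (simplexMiddleBoundary k).transpose with hAdef
  have hA : A.IsHermitian := by
    have := Matrix.isHermitian_mul_conjTranspose_self (simplexMiddleBoundary k)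
    rwa [Matrix.conjTranspose_eq_transpose_of_trivial] at this
  set nR : ℝ := ((2 * k + 1 : ℕ) : ℝ) with hnR
  set V : Matrix (F k (k+1)) (F k (k+1)) ℝ := (hA.eigenvectorUnitary : Matrix (F k (k+1)) (F k (k+1)) ℝ) with hV
  have hVW : V * star V = 1 := Unitary.coe_mul_star_self hA.eigenvectorUnitary
  have hWV : star V * V = 1 := Unitary.coe_star_mul_self hA.eigenvectorUnitary
  have hd : star V * A * V = Matrix.diagonal hA.eigenvalues := by
    have := hA.conjStarAlgAut_star_eigenvectorUnitary
    rwa [Unitary.conjStarAlgAut_star_apply, RCLike.ofReal_real_eq_id, Function.id_comp] at this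
  have hspec : A = V * Matrix.diagonal hA.eigenvalues * star V := by
    have := hA.spectral_theorem
    rwa [Unitary.conjStarAlgAut_apply, RCLike.ofReal_real_eq_id, Function.id_comp] at this
  have hsq : A * A = nR • A := MMt_sq
  have heig : ∀ i, hA.eigenvalues i = 0 ∨ hA.eigenvalues i = nR := by
    intro i
    have hDD : Matrix.diagonal hA.eigenvalues * Matrix.diagonal hA.eigenvalues
        = nR • Matrix.diagonal hA.eigenvalues := by
      rw [← hd]
      calc (star V * A * V) * (star V * A * V)
          = star V * (A * (V * (star V * A) * V)) := by
            simp only [Matrix.mul_assoc]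
        _ = star V * (A * A) * V := by
            rw [← Matrix.mul_assoc V (star V) A, hVW, Matrix.one_mul]
            simp only [Matrix.mul_assoc]
        _ = nR • (star V * A * V) := by
            rw [hsq, Matrix.mul_smul, Matrix.smul_mul]
    have h2 := congrArg (fun B => B i i) hDD
    simp only [Matrix.diagonal_mul_diagonal, Matrix.diagonal_apply_eq,
      Matrix.smul_apply, smul_eq_mul] at h2
    have h3 : (hA.eigenvalues i - nR) * hA.eigenvalues i = 0 := by
      rw [sub_mul, h2, sub_self]
    rcases mul_eq_zero.mp h3 with h | h
    · right; linarith
    · left; exact h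
  have hcp : A.charpoly = ∏ i, (X - C (hA.eigenvalues i)) := by
    conv_lhs => rw [hspec]
    exact charpoly_conj_diag V (star V) hVW _
  -- trace computations
  have hcard : Fintype.card (F k (k+1)) = (2 * k + 1).choose (k + 1) := by
    rw [Fintype.card_finset_len, Fintype.card_fin]
  have htrace : Matrix.trace A = ((k : ℝ) + 1) * ((2 * k + 1).choose (k + 1)) := by
    rw [hAdef, Matrix.trace_mul_comm, Matrix.trace]
    have : ∀ τ : F k (k+1),
        ((simplexMiddleBoundary k).transpose * simplexMiddleBoundary k).diag τ
          = (k : ℝ) + 1 := fun τ => MtM_diag τ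
    rw [Finset.sum_congr rfl (fun τ _ => this τ), Finset.sum_const, Finset.card_univ, hcard,
      nsmul_eq_mul, mul_comm]
  have htr2 : Matrix.trace A = ∑ i, hA.eigenvalues i := by
    conv_lhs => rw [hspec]
    rw [Matrix.trace_mul_comm, ← Matrix.mul_assoc, hWV, Matrix.one_mul, Matrix.trace_diagonal]
  set b := (Finset.univ.filter fun i : F k (k+1) => hA.eigenvalues i = nR).card with hb
  set a := (Finset.univ.filter fun i : F k (k+1) => ¬ hA.eigenvalues i = nR).card with ha
  have hsum : ∑ i, hA.eigenvalues i = (b : ℝ) * nR := by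
    rw [← Finset.sum_filter_add_sum_filter_not Finset.univ
      (fun i : F k (k+1) => hA.eigenvalues i = nR)]
    have e1 : ∑ i ∈ Finset.univ.filter (fun i : F k (k+1) => hA.eigenvalues i = nR),
        hA.eigenvalues i = (b : ℝ) * nR := by
      calc ∑ i ∈ Finset.univ.filter (fun i : F k (k+1) => hA.eigenvalues i = nR),
            hA.eigenvalues i
          = ∑ _i ∈ Finset.univ.filter (fun i : F k (k+1) => hA.eigenvalues i = nR), nR :=
            Finset.sum_congr rfl (fun i hi => (Finset.mem_filter.mp hi).2)
        _ = (b : ℝ) * nR := by rw [Finset.sum_const, nsmul_eq_mul, hb]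
    have e2 : ∑ i ∈ Finset.univ.filter (fun i : F k (k+1) => ¬ hA.eigenvalues i = nR),
        hA.eigenvalues i = 0 :=
      Finset.sum_eq_zero (fun i hi => by
        rcases heig i with h | h
        · exact h
        · exact absurd h (Finset.mem_filter.mp hi).2)
    rw [e1, e2, add_zero]
  have hbnat : b * (2 * k + 1) = (k + 1) * ((2 * k + 1).choose (k + 1)) := by
    have hbr : (b : ℝ) * nR = ((k : ℝ) + 1) * ((2 * k + 1).choose (k + 1)) := by
      rw [← hsum, ← htr2, htrace]
    rw [hnR] at hbr
    exact_mod_cast hbr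
  have hbval : b = (2 * k).choose k := by
    have key := Nat.add_one_mul_choose_eq (2 * k) k
    have h1 : (2 * k + 1) * b = (2 * k + 1) * ((2 * k).choose k) := by
      rw [mul_comm (2 * k + 1) b, hbnat, key, mul_comm]
    exact Nat.eq_of_mul_eq_mul_left (by omega) h1
  have hab : b + a = (2 * k + 1).choose (k + 1) := by
    rw [hb, ha, Finset.card_filter_add_card_filter_not, Finset.card_univ, hcard]
  have haval : a = (2 * k).choose (k + 1) := by
    have pascal := Nat.choose_succ_succ' (2 * k) k
    omega
  have p1 : ∏ i ∈ Finset.univ.filter (fun i : F k (k+1) => hA.eigenvalues i = nR),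
      (X - C (hA.eigenvalues i)) = (X - C nR) ^ b := by
    calc ∏ i ∈ Finset.univ.filter (fun i : F k (k+1) => hA.eigenvalues i = nR),
          (X - C (hA.eigenvalues i))
        = ∏ _i ∈ Finset.univ.filter (fun i : F k (k+1) => hA.eigenvalues i = nR),
            (X - C nR) :=
          Finset.prod_congr rfl (fun i hi => by rw [(Finset.mem_filter.mp hi).2])
      _ = (X - C nR) ^ b := by rw [Finset.prod_const, hb]
  have p2 : ∏ i ∈ Finset.univ.filter (fun i : F k (k+1) => ¬ hA.eigenvalues i = nR),
      (X - C (hA.eigenvalues i)) = X ^ a := by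
    calc ∏ i ∈ Finset.univ.filter (fun i : F k (k+1) => ¬ hA.eigenvalues i = nR),
          (X - C (hA.eigenvalues i))
        = ∏ _i ∈ Finset.univ.filter (fun i : F k (k+1) => ¬ hA.eigenvalues i = nR),
            (X : ℝ[X]) :=
          Finset.prod_congr rfl (fun i hi => by
            rcases heig i with h | h
            · rw [h, map_zero, sub_zero]
            · exact absurd h (Finset.mem_filter.mp hi).2)
      _ = X ^ a := by rw [Finset.prod_const, ha]
  rw [hcp, ← Finset.prod_filter_mul_prod_filter_not Finset.univ
    (fun i : F k (k+1) => hA.eigenvalues i = nR), p1, p2, hbval, haval, mul_comm]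

end SimplexAux

/-- For the simplex on `n = 2k+1` vertices, `det(tI - ∂∂ᵗ) = t^B (t-n)^C` with
`B = C(n-1, k+1)` and `C = C(n-1, k)`; in particular `∂∂ᵗ` has the single nonzero
eigenvalue `n` with multiplicity `C(2k, k)`. -/
theorem simplex_middle_laplacian_charpoly (k : ℕ) (hk : 1 ≤ k) :
    (simplexMiddleBoundary k * (simplexMiddleBoundary k).transpose).charpoly
      = Polynomial.X ^ (Nat.choose (2 * k) (k + 1))
        * (Polynomial.X - Polynomial.C ((2 * k + 1 : ℕ) : ℝ)) ^ (Nat.choose (2 * k) k) := by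
  exact SimplexAux.main_charpoly k
end
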